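/- For each i, the maps φ_i : ⟨θ_i⟩ → E_i, a(x) ↦ a(αξ^{u_i}), and ψ_i : E_i → ⟨θ_i⟩, δ ↦ Σ_{k=0}^{m−1} a_k x^k with a_k = (1/m)·Tr_{E_i/F_q}(δ α^{−k} ξ^{−k u_i}), are mutually inverse F_q-linear field isomorphisms between the minimal λ-constacyclic code ⟨θ_i⟩ ⊆ F_q[x]/⟨x^m−λ⟩ and E_i = F_q(αξ^{u_i}). -/

import Mathlib

set_option synthInstance.maxHeartbeats 1000000
set_option maxHeartbeats 2000000

open Polynomial

/-- The map `φᵢ : ⟨θᵢ⟩ → Eᵢ`, `a(x) ↦ a(αξ^{uᵢ})`, evaluation at the adjoined root. -/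
noncomputable def phiMap {F K : Type*} [Field F] [Field K] [Algebra F K] (β : K)
    (a : Polynomial F) : ↥(IntermediateField.adjoin F {β}) :=
  Polynomial.aeval (IntermediateField.AdjoinSimple.gen F β) a

/-- The map `ψᵢ : Eᵢ → ⟨θᵢ⟩`, `δ ↦ ∑ₖ (1/m)·Tr(δ β^{-k}) xᵏ`. -/
noncomputable def psiMap {F K : Type*} [Field F] [Field K] [Algebra F K] (m : ℕ) (β : K)
    (δ : ↥(IntermediateField.adjoin F {β})) : Polynomial F :=
  ∑ k : Fin m,
    Polynomial.C ((m : F)⁻¹ *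
      Algebra.trace F ↥(IntermediateField.adjoin F {β})
        (δ * (IntermediateField.AdjoinSimple.gen F β)⁻¹ ^ (k : ℕ))) *
      Polynomial.X ^ (k : ℕ)

/-- Character-sum identity: summing `a(αξʲ)·(αξʲ)⁻ᵏ` over all `j < m` recovers `m·aₖ`. -/
lemma charSumAux {F K : Type*} [Field F] [Field K] [Algebra F K]
    {m : ℕ} (hm : 0 < m) {α ξ : K} (hα : α ≠ 0) (hξ : IsPrimitiveRoot ξ m)
    (a : Polynomial F) (ha : a.natDegree < m) {k : ℕ} (hk : k < m) :
    ∑ j ∈ Finset.range m, aeval (α * ξ ^ j) a * ((α * ξ ^ j)⁻¹) ^ k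
      = algebraMap F K ((m : F) * a.coeff k) := by
  have hξ0 : ξ ≠ 0 := hξ.ne_zero hm.ne'
  have hstep : ∀ j i : ℕ, (α * ξ ^ j) ^ i * ((α * ξ ^ j)⁻¹) ^ k
      = (α ^ i * (α ^ k)⁻¹) * (ξ ^ i * (ξ ^ k)⁻¹) ^ j := by
    intro j i
    field_simp
    have hak : α ^ k * α⁻¹ ^ k = 1 := by rw [← mul_pow, mul_inv_cancel₀ hα, one_pow]
    linear_combination (α ^ i * ξ ^ (j * i) * ξ⁻¹ ^ (j * k)) * hak
  have inner : ∀ i ∈ Finset.range m,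
      ∑ j ∈ Finset.range m, (α * ξ ^ j) ^ i * ((α * ξ ^ j)⁻¹) ^ k
        = if i = k then (m : K) else 0 := by
    intro i hi
    simp_rw [hstep]
    rw [← Finset.mul_sum]
    by_cases hik : i = k
    · subst hik
      rw [if_pos rfl, mul_inv_cancel₀ (pow_ne_zero _ hα), mul_inv_cancel₀ (pow_ne_zero _ hξ0)]
      simp
    · rw [if_neg hik]
      have hc1 : ξ ^ i * (ξ ^ k)⁻¹ ≠ 1 := by
        intro h
        apply hik
        apply hξ.pow_inj (Finset.mem_range.mp hi) hk
        field_simp at h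
        exact h
      have hcm : (ξ ^ i * (ξ ^ k)⁻¹) ^ m = 1 := by
        rw [mul_pow, inv_pow, ← pow_mul, ← pow_mul, mul_comm i m, mul_comm k m,
          pow_mul, pow_mul, hξ.pow_eq_one, one_pow, one_pow, inv_one, mul_one]
      have hsum : ∑ j ∈ Finset.range m, (ξ ^ i * (ξ ^ k)⁻¹) ^ j = 0 := by
        have h2 := geom_sum_mul (ξ ^ i * (ξ ^ k)⁻¹) m
        rw [hcm, sub_self] at h2
        rcases mul_eq_zero.mp h2 with h3 | h3
        · exact h3
        · exact absurd (sub_eq_zero.mp h3) hc1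
      rw [hsum, mul_zero]
  calc ∑ j ∈ Finset.range m, aeval (α * ξ ^ j) a * ((α * ξ ^ j)⁻¹) ^ k
      = ∑ i ∈ Finset.range m, a.coeff i •
          ∑ j ∈ Finset.range m, (α * ξ ^ j) ^ i * ((α * ξ ^ j)⁻¹) ^ k := by
        simp_rw [Polynomial.aeval_eq_sum_range' ha, Finset.sum_mul, smul_mul_assoc,
          Finset.smul_sum]
        rw [Finset.sum_comm]
    _ = ∑ i ∈ Finset.range m, (if i = k then a.coeff i • (m : K) else 0) := by
        refine Finset.sum_congr rfl fun i hi => ?_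
        rw [inner i hi]
        split <;> simp
    _ = a.coeff k • (m : K) := by rw [Finset.sum_ite_eq' (Finset.range m) k]
                                  rw [if_pos (Finset.mem_range.mpr hk)]
    _ = algebraMap F K ((m : F) * a.coeff k) := by
        rw [Algebra.smul_def, map_mul, map_natCast, mul_comm]

theorem stmt19 {F K : Type*} [Field F] [Fintype F] [Field K] [Algebra F K]
    (m r u : ℕ) (hm : 0 < m) (hco : Nat.Coprime m (Fintype.card F))
    (lam : F) (hlam : lam ≠ 0) (hr : orderOf lam = r)
    (α : K) (hα : IsPrimitiveRoot α (r * m)) (hαm : α ^ m = algebraMap F K lam)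
    (f : Polynomial F) (hirr : Irreducible f) (hfm : f.Monic)
    (hfd : f ∣ X ^ m - C lam)
    (hu : Polynomial.aeval (α * (α ^ r) ^ u) f = 0)
    (humin : ∀ u' < u, Polynomial.aeval (α * (α ^ r) ^ u') f ≠ 0) :
    (∀ a : Polynomial F, a.degree < m → ((X ^ m - C lam) /ₘ f) ∣ a →
        psiMap m (α * (α ^ r) ^ u) (phiMap (α * (α ^ r) ^ u) a) = a) ∧
    (∀ δ : ↥(IntermediateField.adjoin F {α * (α ^ r) ^ u}),
        (psiMap m (α * (α ^ r) ^ u) δ).degree < m ∧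
        ((X ^ m - C lam) /ₘ f) ∣ psiMap m (α * (α ^ r) ^ u) δ ∧
        phiMap (α * (α ^ r) ^ u) (psiMap m (α * (α ^ r) ^ u) δ) = δ) ∧
    (∀ δ δ' : ↥(IntermediateField.adjoin F {α * (α ^ r) ^ u}),
        psiMap m (α * (α ^ r) ^ u) (δ + δ') =
          psiMap m (α * (α ^ r) ^ u) δ + psiMap m (α * (α ^ r) ^ u) δ') ∧
    (∀ (c : F) (δ : ↥(IntermediateField.adjoin F {α * (α ^ r) ^ u})),
        psiMap m (α * (α ^ r) ^ u) (c • δ) = C c * psiMap m (α * (α ^ r) ^ u) δ) ∧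
    (∀ a b : Polynomial F, a.degree < m → ((X ^ m - C lam) /ₘ f) ∣ a →
        b.degree < m → ((X ^ m - C lam) /ₘ f) ∣ b →
        phiMap (α * (α ^ r) ^ u) ((a * b) %ₘ (X ^ m - C lam)) =
          phiMap (α * (α ^ r) ^ u) a * phiMap (α * (α ^ r) ^ u) b) := by
  classical
  set β := α * (α ^ r) ^ u with hβdef
  set g : Polynomial F := (X ^ m - C lam) /ₘ f with hgdef
  -- ============ basic nonvanishing facts ============
  have hα0 : α ≠ 0 := by
    intro h
    apply hlam
    apply (algebraMap F K).injective
    rw [map_zero, ← hαm, h, zero_pow hm.ne']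
  have hr0 : 0 < r := by
    rw [← hr]
    have hunit : IsUnit lam := hlam.isUnit
    rw [← hunit.unit_spec, orderOf_units]
    exact orderOf_pos _
  have hξ : IsPrimitiveRoot (α ^ r) m := hα.pow (Nat.mul_pos hr0 hm) rfl
  have hξm1 : ((α : K) ^ r) ^ m = 1 := hξ.pow_eq_one
  have hwm : ∀ j : ℕ, (α * (α ^ r) ^ j) ^ m = algebraMap F K lam := by
    intro j
    rw [mul_pow, hαm, ← pow_mul, mul_comm j m, pow_mul, hξm1, one_pow, mul_one]
  have hβm : β ^ m = algebraMap F K lam := hwm u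
  -- ============ (m : F) ≠ 0 ============
  have hmF : (m : F) ≠ 0 := by
    intro h
    have hcharP : CharP F (ringChar F) := ringChar.charP F
    obtain ⟨n, hp, hcard⟩ := FiniteField.card F (ringChar F)
    have hdvd1 : ringChar F ∣ m := (CharP.cast_eq_zero_iff F (ringChar F) m).mp h
    have hdvd2 : ringChar F ∣ Fintype.card F := hcard ▸ dvd_pow_self _ n.ne_zero
    have hdg := Nat.dvd_gcd hdvd1 hdvd2
    rw [Nat.Coprime] at hco
    rw [hco, Nat.dvd_one] at hdg
    exact hp.one_lt.ne' hdg
  -- ============ polynomial factorization facts ============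
  have hfg : f * g = X ^ m - C lam := by
    have h0 : (X ^ m - C lam) %ₘ f = 0 := (Polynomial.modByMonic_eq_zero_iff_dvd hfm).mpr hfd
    conv_rhs => rw [← Polynomial.modByMonic_add_div (X ^ m - C lam) f]
    rw [h0, zero_add]
  have hfne : (X ^ m - C lam : Polynomial F) ≠ 0 := X_pow_sub_C_ne_zero hm lam
  have hg0 : g ≠ 0 := by
    intro h
    rw [h, mul_zero] at hfg
    exact hfne hfg.symm
  have hsep : (X ^ m - C lam : Polynomial F).Separable := separable_X_pow_sub_C lam hmF hlam
  have hmin : minpoly F β = f := (minpoly.eq_of_irreducible_of_monic hirr hu hfm).symm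
  have hint : IsIntegral F β := ⟨f, hfm, by rwa [aeval_def] at hu⟩
  -- ============ roots of X^m - lam in K ============
  have hsol : ∀ z : K, z ^ m = algebraMap F K lam → ∃ j < m, z = α * (α ^ r) ^ j := by
    intro z hz
    haveI : NeZero m := ⟨hm.ne'⟩
    have h1 : (z * α⁻¹) ^ m = 1 := by
      rw [mul_pow, inv_pow, hz, ← hαm, mul_inv_cancel₀ (pow_ne_zero m hα0)]
    obtain ⟨j, hj, hje⟩ := hξ.eq_pow_of_pow_eq_one h1
    refine ⟨j, hj, ?_⟩
    rw [hje]
    field_simp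
  have hinjroots : ∀ j ∈ Finset.range m, ∀ j' ∈ Finset.range m,
      α * (α ^ r) ^ j = α * (α ^ r) ^ j' → j = j' := by
    intro j hj j' hj' h
    exact hξ.pow_inj (Finset.mem_range.mp hj) (Finset.mem_range.mp hj')
      (mul_left_cancel₀ hα0 h)
  set S : Finset ℕ := (Finset.range m).filter (fun j => aeval (α * (α ^ r) ^ j) f = 0)
    with hSdef
  -- ============ S has cardinality deg f ============
  have hcardS : S.card = f.natDegree := by
    set fK : Polynomial K := f.map (algebraMap F K) with hfKdef
    have hf0 : f ≠ 0 := hirr.ne_zero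
    have hfK0 : fK ≠ 0 := Polynomial.map_ne_zero hf0
    have hPsplit : Polynomial.Splits ((X ^ m - C lam).map (algebraMap F K)) := by
      rw [Polynomial.map_sub, Polynomial.map_pow, Polynomial.map_X, Polynomial.map_C]
      apply Polynomial.splits_iff_card_roots.mpr
      have hub : (X ^ m - C (algebraMap F K lam)).roots.card ≤ m := by
        have h := Polynomial.card_roots' (X ^ m - C (algebraMap F K lam))
        rwa [Polynomial.natDegree_X_pow_sub_C] at h
      have hlb : m ≤ (X ^ m - C (algebraMap F K lam)).roots.card := by
        have hmap : ∀ j ∈ Finset.range m,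
            (α * (α ^ r) ^ j) ∈ (X ^ m - C (algebraMap F K lam)).roots.toFinset := by
          intro j _
          rw [Multiset.mem_toFinset, Polynomial.mem_roots (X_pow_sub_C_ne_zero hm _)]
          simp [Polynomial.IsRoot, hwm j]
        have h1 : (Finset.range m).card ≤
            (X ^ m - C (algebraMap F K lam)).roots.toFinset.card := by
          apply Finset.card_le_card_of_injOn _ hmap
          intro j hj j' hj' h
          exact hinjroots j (Finset.mem_coe.mp hj) j' (Finset.mem_coe.mp hj') h
        have h2 := Multiset.toFinset_card_le (X ^ m - C (algebraMap F K lam)).roots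
        rw [Finset.card_range] at h1
        exact le_trans h1 h2
      rw [Polynomial.natDegree_X_pow_sub_C]
      exact le_antisymm hub hlb
    have hfsplit : Polynomial.Splits (f.map (algebraMap F K)) :=
      hPsplit.of_dvd (Polynomial.map_ne_zero hfne) (Polynomial.map_dvd _ hfd)
    have hnodup : fK.roots.Nodup :=
      Polynomial.nodup_roots ((Polynomial.separable_map _).mpr (hsep.of_dvd hfd))
    have hrootscard : fK.roots.card = f.natDegree := by
      rw [← Polynomial.natDegree_map (algebraMap F K)]
      exact Polynomial.splits_iff_card_roots.mp hfsplit
    rw [← hrootscard, ← Multiset.toFinset_card_of_nodup hnodup]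
    apply Finset.card_bij (fun j _ => α * (α ^ r) ^ j)
    · intro j hj
      rw [hSdef, Finset.mem_filter] at hj
      rw [Multiset.mem_toFinset, Polynomial.mem_roots hfK0]
      rw [Polynomial.IsRoot, hfKdef, Polynomial.eval_map, ← Polynomial.aeval_def]
      exact hj.2
    · intro j hj j' hj' h
      rw [hSdef, Finset.mem_filter] at hj hj'
      exact hinjroots j (hj.1) j' (hj'.1) h
    · intro z hz
      rw [Multiset.mem_toFinset, Polynomial.mem_roots hfK0, Polynomial.IsRoot, hfKdef,
        Polynomial.eval_map, ← Polynomial.aeval_def] at hz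
      have hzm : z ^ m = algebraMap F K lam := by
        obtain ⟨c, hc⟩ := hfd
        have h4 := congrArg (aeval z) hc
        rw [map_mul, hz, zero_mul, map_sub, aeval_X_pow, aeval_C] at h4
        exact sub_eq_zero.mp h4
      obtain ⟨j, hj, hje⟩ := hsol z hzm
      exact ⟨j, by rw [hSdef, Finset.mem_filter]
                   exact ⟨Finset.mem_range.mpr hj, by rw [← hje]; exact hz⟩, hje.symm⟩
  -- ============ the field E = F(β) ============
  haveI : FiniteDimensional F ↥(IntermediateField.adjoin F {β}) :=
    IntermediateField.adjoin.finiteDimensional hint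
  haveI : Finite ↥(IntermediateField.adjoin F {β}) := Module.finite_of_finite F
  have haevalgenf : aeval (IntermediateField.AdjoinSimple.gen F β) f = 0 := by
    have h := IntermediateField.aeval_gen_minpoly F β
    rwa [hmin] at h
  have hgenm : (IntermediateField.AdjoinSimple.gen F β) ^ m
      = algebraMap F ↥(IntermediateField.adjoin F {β}) lam := by
    apply (algebraMap (↥(IntermediateField.adjoin F {β})) K).injective
    rw [map_pow, IntermediateField.AdjoinSimple.algebraMap_gen, hβm,
      ← IsScalarTower.algebraMap_apply]
  have hcardAut : Fintype.card (↥(IntermediateField.adjoin F {β}) ≃ₐ[F]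
      ↥(IntermediateField.adjoin F {β})) = f.natDegree := by
    rw [← Nat.card_eq_fintype_card, IsGalois.card_aut_eq_finrank F ↥(IntermediateField.adjoin F {β})]
    have h := IntermediateField.adjoin.finrank hint
    rw [hmin] at h
    exact h
  -- ============ each automorphism sends gen to a root indexed by S ============
  have hστ : ∀ σ : (↥(IntermediateField.adjoin F {β}) ≃ₐ[F] ↥(IntermediateField.adjoin F {β})),
      ∃ j ∈ S, algebraMap (↥(IntermediateField.adjoin F {β})) K
        (σ (IntermediateField.AdjoinSimple.gen F β)) = α * (α ^ r) ^ j := by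
    intro σ
    have h1 : aeval (σ (IntermediateField.AdjoinSimple.gen F β)) f = 0 := by
      rw [Polynomial.aeval_algHom_apply σ (IntermediateField.AdjoinSimple.gen F β) f,
        haevalgenf, map_zero]
    have h2 : aeval (algebraMap (↥(IntermediateField.adjoin F {β})) K
        (σ (IntermediateField.AdjoinSimple.gen F β))) f = 0 := by
      rw [Polynomial.aeval_algebraMap_apply, h1, map_zero]
    have h3 : (algebraMap (↥(IntermediateField.adjoin F {β})) K
        (σ (IntermediateField.AdjoinSimple.gen F β))) ^ m = algebraMap F K lam := by
      obtain ⟨c, hc⟩ := hfd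
      have h4 := congrArg (aeval (algebraMap (↥(IntermediateField.adjoin F {β})) K
        (σ (IntermediateField.AdjoinSimple.gen F β)))) hc
      rw [map_mul, h2, zero_mul, map_sub, aeval_X_pow, aeval_C] at h4
      exact sub_eq_zero.mp h4
    obtain ⟨j, hj, hje⟩ := hsol _ h3
    refine ⟨j, ?_, hje⟩
    rw [hSdef, Finset.mem_filter]
    exact ⟨Finset.mem_range.mpr hj, by rw [← hje]; exact h2⟩
  choose eσ heσS heσeq using hστ
  have heσinj : ∀ σ τ, eσ σ = eσ τ → σ = τ := by
    intro σ τ h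
    have hgeneq : σ (IntermediateField.AdjoinSimple.gen F β)
        = τ (IntermediateField.AdjoinSimple.gen F β) := by
      apply (algebraMap (↥(IntermediateField.adjoin F {β})) K).injective
      rw [heσeq σ, heσeq τ, h]
    have halg : σ.toAlgHom = τ.toAlgHom := by
      apply PowerBasis.algHom_ext (IntermediateField.adjoin.powerBasis hint)
      simpa using hgeneq
    exact AlgEquiv.coe_algHom_injective halg
  -- ============ the key trace identity ============
  have keyTrace : ∀ a : Polynomial F, a.natDegree < m → g ∣ a → ∀ k : ℕ, k < m →
      Algebra.trace F ↥(IntermediateField.adjoin F {β})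
        (aeval (IntermediateField.AdjoinSimple.gen F β) a *
          (IntermediateField.AdjoinSimple.gen F β)⁻¹ ^ k) = (m : F) * a.coeff k := by
    intro a hdeg hdvd k hk
    apply (algebraMap F K).injective
    rw [IsScalarTower.algebraMap_apply F ↥(IntermediateField.adjoin F {β}) K,
      trace_eq_sum_automorphisms]
    rw [map_sum (algebraMap (↥(IntermediateField.adjoin F {β})) K) _ Finset.univ]
    have stepA : ∀ σ : (↥(IntermediateField.adjoin F {β}) ≃ₐ[F]
        ↥(IntermediateField.adjoin F {β})),
        algebraMap (↥(IntermediateField.adjoin F {β})) K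
          (σ (aeval (IntermediateField.AdjoinSimple.gen F β) a *
            (IntermediateField.AdjoinSimple.gen F β)⁻¹ ^ k))
          = aeval (α * (α ^ r) ^ (eσ σ)) a * ((α * (α ^ r) ^ (eσ σ))⁻¹) ^ k := by
      intro σ
      rw [map_mul, map_mul, map_pow, map_pow, map_inv₀, map_inv₀,
        ← Polynomial.aeval_algHom_apply σ (IntermediateField.AdjoinSimple.gen F β) a,
        ← Polynomial.aeval_algebraMap_apply, heσeq σ]
    rw [Fintype.sum_congr _ _ stepA]
    have stepB : ∑ σ : (↥(IntermediateField.adjoin F {β}) ≃ₐ[F]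
          ↥(IntermediateField.adjoin F {β})),
        aeval (α * (α ^ r) ^ (eσ σ)) a * ((α * (α ^ r) ^ (eσ σ))⁻¹) ^ k
        = ∑ j ∈ S, aeval (α * (α ^ r) ^ j) a * ((α * (α ^ r) ^ j)⁻¹) ^ k := by
      apply Finset.sum_bij (fun σ _ => eσ σ)
      · intro σ _; exact heσS σ
      · intro σ _ τ _ h; exact heσinj σ τ h
      · intro j hj
        have hcard : S.card ≤ (Finset.univ : Finset (↥(IntermediateField.adjoin F {β}) ≃ₐ[F]
            ↥(IntermediateField.adjoin F {β}))).card := by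
          rw [Finset.card_univ, hcardAut, hcardS]
        obtain ⟨σ, hσ, hσe⟩ := Finset.surj_on_of_inj_on_of_card_le
          (fun σ _ => eσ σ) (fun σ _ => heσS σ) (fun σ τ _ _ h => heσinj σ τ h) hcard j hj
        exact ⟨σ, hσ, hσe.symm⟩
      · intro σ _; rfl
    rw [stepB]
    have stepC : ∑ j ∈ S, aeval (α * (α ^ r) ^ j) a * ((α * (α ^ r) ^ j)⁻¹) ^ k
        = ∑ j ∈ Finset.range m, aeval (α * (α ^ r) ^ j) a * ((α * (α ^ r) ^ j)⁻¹) ^ k := by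
      apply Finset.sum_subset (Finset.filter_subset _ _)
      intro j hjm hjS
      have hfj : aeval (α * (α ^ r) ^ j) f ≠ 0 := by
        intro h
        exact hjS (Finset.mem_filter.mpr ⟨hjm, h⟩)
      have hgj : aeval (α * (α ^ r) ^ j) g = 0 := by
        have h5 := congrArg (aeval (α * (α ^ r) ^ j)) hfg
        rw [map_mul, map_sub, aeval_X_pow, aeval_C, hwm j, sub_self] at h5
        rcases mul_eq_zero.mp h5 with h6 | h6
        · exact absurd h6 hfj
        · exact h6
      obtain ⟨c, hc⟩ := hdvd
      rw [hc, map_mul, hgj, zero_mul, zero_mul]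
    rw [stepC, charSumAux hm hα0 hξ a hdeg hk]
  -- ============ degree < m implies natDegree < m ============
  have hnatdeg : ∀ a : Polynomial F, a.degree < (m : ℕ) → a.natDegree < m := by
    intro a h
    rcases eq_or_ne a 0 with rfl | h0
    · simpa using hm
    · exact (Polynomial.natDegree_lt_iff_degree_lt h0).mpr h
  -- ============ Part 1 : ψ ∘ φ = id on the code ============
  have hPsiPhi : ∀ a : Polynomial F, a.degree < (m : ℕ) → g ∣ a →
      psiMap m β (phiMap β a) = a := by
    intro a hdeg hdvd
    have hnd : a.natDegree < m := hnatdeg a hdeg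
    simp only [psiMap, phiMap]
    trans (∑ k : Fin m, C (a.coeff (k : ℕ)) * X ^ (k : ℕ))
    · refine Finset.sum_congr rfl fun k _ => ?_
      rw [keyTrace a hnd hdvd (k : ℕ) k.isLt, inv_mul_cancel_left₀ hmF]
    · rw [Fin.sum_univ_eq_sum_range (fun k => C (a.coeff k) * X ^ k) m]
      conv_rhs => rw [Polynomial.as_sum_range' a m hnd]
      exact Finset.sum_congr rfl fun i _ => Polynomial.C_mul_X_pow_eq_monomial
  refine ⟨hPsiPhi, ?_, ?_, ?_, ?_⟩
  -- ============ Part 2 : φ ∘ ψ = id on E ============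
  · intro δ
    have hgengne : aeval (IntermediateField.AdjoinSimple.gen F β) g ≠ 0 := by
      intro h
      have hK : aeval β g = 0 := by
        rw [← IntermediateField.AdjoinSimple.algebraMap_gen F β,
          Polynomial.aeval_algebraMap_apply, h, map_zero]
      have hdvdg : f ∣ g := by rw [← hmin]; exact minpoly.dvd F β hK
      obtain ⟨c, hc⟩ := hdvdg
      exact hirr.not_isUnit (hsep.squarefree f ⟨c, by rw [← hfg, hc]; ring⟩)
    obtain ⟨q, hq⟩ := (IntermediateField.adjoin.powerBasis hint).exists_eq_aeval'
      (δ * (aeval (IntermediateField.AdjoinSimple.gen F β) g)⁻¹)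
    rw [IntermediateField.adjoin.powerBasis_gen] at hq
    have hφa : phiMap β (g * (q %ₘ f)) = δ := by
      simp only [phiMap]
      rw [map_mul]
      have h2 : aeval (IntermediateField.AdjoinSimple.gen F β) (q %ₘ f)
          = aeval (IntermediateField.AdjoinSimple.gen F β) q := by
        rw [Polynomial.modByMonic_eq_sub_mul_div q f, map_sub, map_mul, haevalgenf,
          zero_mul, sub_zero]
      rw [h2, ← hq, mul_comm]
      exact inv_mul_cancel_right₀ hgengne δ
    have hdeg : (g * (q %ₘ f)).degree < (m : ℕ) := by
      by_cases hq0 : q %ₘ f = 0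
      · rw [hq0, mul_zero, Polynomial.degree_zero]
        exact_mod_cast WithBot.bot_lt_coe m
      · have h1 : (q %ₘ f).degree < f.degree := Polynomial.degree_modByMonic_lt q hfm
        have h2 : g.degree ≠ ⊥ := by rwa [Ne, Polynomial.degree_eq_bot]
        have h3 : (g * (q %ₘ f)).degree = g.degree + (q %ₘ f).degree := Polynomial.degree_mul
        have h4 : g.degree + (q %ₘ f).degree < g.degree + f.degree :=
          WithBot.add_lt_add_left h2 h1
        have h5 : g.degree + f.degree = (m : WithBot ℕ) := by
          rw [add_comm, ← Polynomial.degree_mul, hfg, Polynomial.degree_X_pow_sub_C hm]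
        rw [h3]
        rw [h5] at h4
        exact_mod_cast h4
    have hdvd : g ∣ g * (q %ₘ f) := dvd_mul_right g _
    have hψ := hPsiPhi _ hdeg hdvd
    rw [hφa] at hψ
    refine ⟨?_, ?_, ?_⟩
    · rw [hψ]; exact hdeg
    · rw [hψ]; exact hdvd
    · rw [hψ]; exact hφa
  -- ============ Part 3 : ψ additive ============
  · intro δ δ'
    simp only [psiMap, add_mul, map_add, mul_add, ← Finset.sum_add_distrib]
  -- ============ Part 4 : ψ F-linear ============
  · intro c δ
    simp only [psiMap, Finset.mul_sum]
    refine Finset.sum_congr rfl fun k _ => ?_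
    rw [smul_mul_assoc, map_smul, smul_eq_mul, mul_left_comm, map_mul, mul_assoc]
  -- ============ Part 5 : φ multiplicative ============
  · intro a b _ _ _ _
    have hmonicP : (X ^ m - C lam : Polynomial F).Monic := monic_X_pow_sub_C lam hm.ne'
    simp only [phiMap]
    rw [Polynomial.modByMonic_eq_sub_mul_div (a * b) (X ^ m - C lam), map_sub, map_mul, map_mul, map_sub,
      aeval_X_pow, aeval_C, hgenm, sub_self, zero_mul, sub_zero]
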